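/- Let (Ω, F, (F_k)_{k≥0}, P) be a filtered probability space, d ≥ 1, and f : ℝ^d → ℝ^d a function with ‖f(x)‖_∞ ≤ B for all x and ‖f(x) − f(z)‖_∞ ≤ L‖x − z‖_∞ for all x, z. For an integer N ≥ 1, let (ρ_k)_{k≥0} be an adapted ℝ^d-valued process with ρ_0 deterministic satisfying ρ_{k+1} = ρ_k + (1/N)(f(ρ_k) + w_{k+1}), where E[w_{k+1} | F_k] = 0 and ‖w_{k+1}‖_∞ ≤ Γ almost surely for all k. Let (θ_k) be the deterministic mean-field recursion θ_0 = ρ_0, θ_{k+1} = θ_k + (1/N) f(θ_k). Then for every c > 0 there exist constants C_1, C_2 > 0, depending only on d, B, L, Γ, c (and not on N or ε), such that for every N ≥ 1, every ε > 0, and every integer horizon T with T ≤ cN, P( max_{0 ≤ k ≤ T} ‖ρ_k − θ_k‖_∞ ≥ ε ) ≤ C_1 exp(−C_2 ε² N). -/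

import Mathlib

open MeasureTheory Finset

lemma mfdb_exp_le {t G x : ℝ} (hG : 0 < G) (hx : |x| ≤ G) :
    Real.exp (t * x) ≤ Real.cosh (t * G) + (Real.sinh (t * G) / G) * x := by
  obtain ⟨hx1, hx2⟩ := abs_le.mp hx
  have hG' : G ≠ 0 := ne_of_gt hG
  have ha : (0:ℝ) ≤ (G + x) / (2 * G) := div_nonneg (by linarith) (by linarith)
  have hb : (0:ℝ) ≤ (G - x) / (2 * G) := div_nonneg (by linarith) (by linarith)
  have hab : (G + x) / (2 * G) + (G - x) / (2 * G) = 1 := by field_simp; ring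
  have key := convexOn_exp.2 (Set.mem_univ (t * G)) (Set.mem_univ (-(t * G))) ha hb hab
  have h1 : ((G + x) / (2 * G)) • (t * G) + ((G - x) / (2 * G)) • (-(t * G)) = t * x := by
    simp only [smul_eq_mul]
    rw [div_mul_eq_mul_div, div_mul_eq_mul_div, ← add_div, div_eq_iff (by positivity : (2:ℝ)*G ≠ 0)]
    ring
  rw [h1] at key
  refine key.trans (le_of_eq ?_)
  simp only [smul_eq_mul, Real.cosh_eq, Real.sinh_eq]
  rw [div_mul_eq_mul_div, div_mul_eq_mul_div, ← add_div]
  rw [div_div, div_mul_eq_mul_div, div_add_div _ _ (by norm_num : (2:ℝ) ≠ 0) (by positivity : (2:ℝ)*G ≠ 0),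
    div_eq_div_iff (by positivity) (by positivity)]
  ring

lemma mfdb_azuma {Ω : Type} {mΩ : MeasurableSpace Ω} (P : Measure Ω) [IsProbabilityMeasure P]
    (F : Filtration ℕ mΩ) (v : ℕ → Ω → ℝ)
    (hmeas : ∀ k, StronglyMeasurable[F (k + 1)] (v (k + 1)))
    (hcond : ∀ k, P[v (k + 1)|F k] =ᵐ[P] 0)
    {G : ℝ} (hG : 0 < G) (hbdd : ∀ k, ∀ᵐ ω ∂P, |v (k + 1) ω| ≤ G)
    (T : ℕ) {t lam : ℝ} (ht : 0 < t) :
    P {ω | ∃ k ≤ T, lam ≤ ∑ j ∈ Finset.range k, v (j + 1) ω} ≤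
      ENNReal.ofReal (Real.cosh (t * G) ^ T * Real.exp (-(t * lam))) := by
  set S : ℕ → Ω → ℝ := fun k ω => ∑ j ∈ Finset.range k, v (j + 1) ω with hS
  set X : ℕ → Ω → ℝ := fun k ω => Real.exp (t * S k ω) with hX
  -- measurability
  have hSmeas : ∀ k, StronglyMeasurable[F k] (S k) := by
    intro k
    apply Finset.stronglyMeasurable_fun_sum
    intro j hj
    exact (hmeas j).mono (F.mono (Finset.mem_range.mp hj))
  have hXmeas : ∀ k, StronglyMeasurable[F k] (X k) := fun k =>
    Real.continuous_exp.comp_stronglyMeasurable ((hSmeas k).const_mul t)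
  have hXaes : ∀ k, AEStronglyMeasurable (X k) P := fun k =>
    ((hXmeas k).mono (F.le k)).aestronglyMeasurable
  have hvaes : ∀ k, AEStronglyMeasurable (v (k + 1)) P := fun k =>
    ((hmeas k).mono (F.le (k + 1))).aestronglyMeasurable
  -- boundedness
  have hballs : ∀ᵐ ω ∂P, ∀ j, |v (j + 1) ω| ≤ G := ae_all_iff.2 hbdd
  have hSbdd : ∀ k, ∀ᵐ ω ∂P, |S k ω| ≤ k * G := by
    intro k
    filter_upwards [hballs] with ω hω
    calc |S k ω| ≤ ∑ j ∈ Finset.range k, |v (j + 1) ω| := Finset.abs_sum_le_sum_abs _ _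
      _ ≤ ∑ _j ∈ Finset.range k, G := Finset.sum_le_sum fun j _ => hω j
      _ = k * G := by simp [mul_comm]
  have hXbdd : ∀ k, ∀ᵐ ω ∂P, ‖X k ω‖ ≤ Real.exp (t * (k * G)) := by
    intro k
    filter_upwards [hSbdd k] with ω hω
    rw [Real.norm_eq_abs, abs_of_pos (Real.exp_pos _)]
    exact Real.exp_le_exp.2 (mul_le_mul_of_nonneg_left ((le_abs_self _).trans hω) ht.le)
  have hXint : ∀ k, Integrable (X k) P := fun k =>
    (integrable_const _).mono' (hXaes k) (hXbdd k)
  have hvint : ∀ k, Integrable (v (k + 1)) P := fun k =>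
    (integrable_const G).mono' (hvaes k) ((hbdd k).mono fun ω h => by rwa [Real.norm_eq_abs])
  have hXvint : ∀ k, Integrable (fun ω => X k ω * v (k + 1) ω) P := by
    intro k
    refine (integrable_const (Real.exp (t * (k * G)) * G)).mono'
      ((hXaes k).mul (hvaes k)) ?_
    filter_upwards [hXbdd k, hbdd k] with ω h1 h2
    rw [Real.norm_eq_abs, abs_mul]
    exact mul_le_mul (by rwa [Real.norm_eq_abs] at h1) h2 (abs_nonneg _)
      (Real.exp_pos _).le
  have hX1int : ∀ k, Integrable (fun ω => X k ω * (1 + t * v (k + 1) ω)) P := by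
    intro k
    refine (integrable_const (Real.exp (t * (k * G)) * (1 + t * G))).mono'
      ((hXaes k).mul (aestronglyMeasurable_const.add ((hvaes k).const_mul t))) ?_
    filter_upwards [hXbdd k, hbdd k] with ω h1 h2
    rw [Real.norm_eq_abs, abs_mul]
    refine mul_le_mul (by rwa [Real.norm_eq_abs] at h1) ?_ (abs_nonneg _) (Real.exp_pos _).le
    calc |1 + t * v (k + 1) ω| ≤ 1 + |t * v (k + 1) ω| := by
          refine (abs_add_le _ _).trans ?_; simp
      _ ≤ 1 + t * G := by
          rw [abs_mul, abs_of_pos ht]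
          exact add_le_add_right (mul_le_mul_of_nonneg_left h2 ht.le) 1
  have hXsucc : ∀ k ω, X (k + 1) ω = X k ω * Real.exp (t * v (k + 1) ω) := by
    intro k ω
    rw [hX, hS]
    simp only [Finset.sum_range_succ, mul_add, Real.exp_add]
  -- submartingale
  have hsub : Submartingale X F P := by
    refine submartingale_nat (fun k => hXmeas k) hXint (fun k => ?_)
    have hpull : P[(fun ω => X k ω * (1 + t * v (k + 1) ω))|F k]
        =ᵐ[P] X k * P[(fun ω => 1 + t * v (k + 1) ω)|F k] := by
      exact condExp_mul_of_stronglyMeasurable_left (hXmeas k) (hX1int k)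
        ((integrable_const 1).add ((hvint k).const_mul t))
    have hone : P[(fun ω => 1 + t * v (k + 1) ω)|F k] =ᵐ[P] fun _ => 1 := by
      have hgeq : (fun ω => 1 + t * v (k + 1) ω) = (fun _ => (1:ℝ)) + t • v (k + 1) := by
        funext ω; simp [smul_eq_mul]
      rw [hgeq]
      have h1 := condExp_add (μ := P) (m := F k) (integrable_const (1:ℝ))
        ((hvint k).smul t)
      have h2 := condExp_smul (μ := P) (m := F k) (t : ℝ) (v (k + 1))
      have h3 : P[fun _ => (1:ℝ)|F k] = fun _ => (1:ℝ) := condExp_const (F.le k) 1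
      filter_upwards [h1, h2, hcond k] with ω e1 e2 e3
      simp only [Pi.add_apply] at e1
      rw [e1, h3, e2]
      simp only [Pi.smul_apply, smul_eq_mul, e3]
      simp
    have hmono : (fun ω => X k ω * (1 + t * v (k + 1) ω)) ≤ᵐ[P] X (k + 1) := by
      refine ae_of_all _ fun ω => ?_
      rw [hXsucc k ω]
      refine mul_le_mul_of_nonneg_left ?_ (Real.exp_pos _).le
      have := Real.add_one_le_exp (t * v (k + 1) ω)
      linarith
    have h2 := condExp_mono (m := F k) (hX1int k) (hXint (k + 1)) hmono
    filter_upwards [hpull, hone, h2] with ω e1 e2 e3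
    have e1' : (P[(fun ω => X k ω * (1 + t * v (k + 1) ω))|F k]) ω = X k ω := by
      rw [e1]
      simp only [Pi.mul_apply, e2]
      ring
    calc X k ω = (P[(fun ω => X k ω * (1 + t * v (k + 1) ω))|F k]) ω := e1'.symm
      _ ≤ _ := e3
  have hnonneg : (0 : ℕ → Ω → ℝ) ≤ X := fun k ω => (Real.exp_pos _).le
  -- MGF bound
  have hzero : ∀ k, ∫ ω, X k ω * v (k + 1) ω ∂P = 0 := by
    intro k
    have h1 : P[(fun ω => X k ω * v (k + 1) ω)|F k] =ᵐ[P] X k * P[v (k + 1)|F k] :=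
      condExp_mul_of_stronglyMeasurable_left (hXmeas k) (hXvint k) (hvint k)
    have h2 : P[(fun ω => X k ω * v (k + 1) ω)|F k] =ᵐ[P] fun _ => (0:ℝ) := by
      filter_upwards [h1, hcond k] with ω e1 e2
      simp only [Pi.mul_apply] at e1
      rw [e1, e2]; simp
    calc ∫ ω, X k ω * v (k + 1) ω ∂P
        = ∫ ω, (P[(fun ω => X k ω * v (k + 1) ω)|F k]) ω ∂P :=
          (integral_condExp (F.le k)).symm
      _ = ∫ _ω, (0:ℝ) ∂P := integral_congr_ae h2
      _ = 0 := by simp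
  have hMGF : ∀ k, ∫ ω, X k ω ∂P ≤ Real.cosh (t * G) ^ k := by
    intro k
    induction k with
    | zero =>
      simp only [hX, hS]
      simp [Real.exp_zero, measure_univ]
    | succ k ih =>
      have hstep : ∫ ω, X (k + 1) ω ∂P ≤
          ∫ ω, (Real.cosh (t * G) * X k ω + (Real.sinh (t * G) / G) * (X k ω * v (k + 1) ω)) ∂P := by
        refine integral_mono_ae (hXint (k + 1))
          (((hXint k).const_mul _).add ((hXvint k).const_mul _)) ?_
        filter_upwards [hbdd k] with ω hω
        rw [hXsucc k ω]
        have h1 := mfdb_exp_le (t := t) hG hω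
        have h2 : (0:ℝ) ≤ X k ω := (Real.exp_pos _).le
        nlinarith [mul_le_mul_of_nonneg_left h1 h2]
      rw [integral_add ((hXint k).const_mul _) ((hXvint k).const_mul _),
        integral_const_mul, integral_const_mul, hzero k, mul_zero, add_zero] at hstep
      calc ∫ ω, X (k + 1) ω ∂P ≤ Real.cosh (t * G) * ∫ ω, X k ω ∂P := hstep
        _ ≤ Real.cosh (t * G) * Real.cosh (t * G) ^ k :=
          mul_le_mul_of_nonneg_left ih (Real.cosh_pos _).le
        _ = Real.cosh (t * G) ^ (k + 1) := by ring
  -- Doob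
  set r : NNReal := ⟨Real.exp (t * lam), (Real.exp_pos _).le⟩ with hr
  have hsubset : {ω | ∃ k ≤ T, lam ≤ S k ω} ⊆
      {ω | (r : ℝ) ≤ (Finset.range (T + 1)).sup' Finset.nonempty_range_add_one fun k => X k ω} := by
    rintro ω ⟨k, hk, hlam⟩
    refine le_trans ?_ (Finset.le_sup' (fun k => X k ω) (Finset.mem_range.2 (Nat.lt_succ_of_le hk)))
    show Real.exp (t * lam) ≤ Real.exp (t * S k ω)
    exact Real.exp_le_exp.2 (mul_le_mul_of_nonneg_left hlam ht.le)
  have hdoob := maximal_ineq hsub hnonneg (ε := r) T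
  have hsint : ∫ ω in {ω | (r : ℝ) ≤ (Finset.range (T + 1)).sup' Finset.nonempty_range_add_one
      fun k => X k ω}, X T ω ∂P ≤ ∫ ω, X T ω ∂P :=
    setIntegral_le_integral (hXint T) (ae_of_all _ fun ω => (Real.exp_pos _).le)
  have hr0 : (r : ENNReal) ≠ 0 := by
    rw [Ne, ENNReal.coe_eq_zero, ← NNReal.coe_eq_zero]
    exact (Real.exp_pos _).ne'
  have key : P {ω | (r : ℝ) ≤ (Finset.range (T + 1)).sup' Finset.nonempty_range_add_one
      fun k => X k ω} ≤ ENNReal.ofReal (Real.cosh (t * G) ^ T) / (r : ENNReal) := by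
    rw [ENNReal.le_div_iff_mul_le (Or.inl hr0) (Or.inl ENNReal.coe_ne_top), mul_comm]
    calc (r : ENNReal) * _ = r • P _ := by simp [ENNReal.smul_def]
      _ ≤ ENNReal.ofReal (∫ ω in _, X T ω ∂P) := hdoob
      _ ≤ ENNReal.ofReal (Real.cosh (t * G) ^ T) :=
        ENNReal.ofReal_le_ofReal (hsint.trans (hMGF T))
  refine le_trans (measure_mono hsubset) (key.trans (le_of_eq ?_))
  have hcoe : (r : ENNReal) = ENNReal.ofReal (Real.exp (t * lam)) := by
    rw [ENNReal.ofReal, Real.toNNReal_of_nonneg (Real.exp_pos _).le]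
    rfl
  rw [hcoe, ← ENNReal.ofReal_div_of_pos (Real.exp_pos _)]
  congr 1
  rw [Real.exp_neg, div_eq_mul_inv]

lemma mfdb_condexp_eval {Ω : Type} {mΩ : MeasurableSpace Ω} (P : Measure Ω)
    [IsProbabilityMeasure P] (F : Filtration ℕ mΩ) (k : ℕ) {d : ℕ}
    {w : Ω → (Fin d → ℝ)} (hint : Integrable w P) (h : P[w|F k] =ᵐ[P] 0) (i : Fin d) :
    P[(fun ω => w ω i)|F k] =ᵐ[P] 0 := by
  have hfi : Integrable (fun ω => w ω i) P :=
    (ContinuousLinearMap.proj (R := ℝ) (φ := fun _ : Fin d => ℝ) i).integrable_comp hint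
  refine (ae_eq_condExp_of_forall_setIntegral_eq (F.le k) hfi
    (fun s _ _ => (integrable_zero _ _ _).integrableOn)
    (fun s hs hμs => ?_)
    (stronglyMeasurable_zero.aestronglyMeasurable)).symm
  have h1 : ∫ x in s, w x ∂P = 0 := by
    rw [← setIntegral_condExp (F.le k) hint hs]
    rw [setIntegral_congr_ae (F.le k s hs) (h.mono fun x hx _ => hx)]
    simp
  have h2 : (∫ x in s, w x ∂P) i = ∫ x in s, w x i ∂P := by
    have := (ContinuousLinearMap.proj (R := ℝ) (φ := fun _ : Fin d => ℝ) i).integral_comp_comm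
      (hint.integrableOn (s := s))
    exact this.symm
  rw [← h2, h1]
  simp

/-- Mean-field approximation bound (Theorem 2): a stochastic approximation recursion
with step size `1/N`, bounded martingale-difference noise and bounded Lipschitz drift
stays within `ε` of its deterministic mean-field trajectory over horizons `T ≤ c N`,
except on an event of probability at most `C₁ exp(-C₂ ε² N)`, where the constants
`C₁, C₂` depend only on `d, B, L, Γ, c`. -/
theorem meanFieldDynamicsBound
    (d : ℕ) (hd : 1 ≤ d) (B L Γ : ℝ) (c : ℝ) (hc : 0 < c) :
    ∃ C₁ C₂ : ℝ, 0 < C₁ ∧ 0 < C₂ ∧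
      ∀ (Ω : Type) (mΩ : MeasurableSpace Ω) (P : Measure Ω),
        IsProbabilityMeasure P →
      ∀ (F : Filtration ℕ mΩ) (f : (Fin d → ℝ) → (Fin d → ℝ)),
        (∀ x, ‖f x‖ ≤ B) →
        (∀ x z, ‖f x - f z‖ ≤ L * ‖x - z‖) →
      ∀ (N : ℕ), 1 ≤ N →
      ∀ (ρ w : ℕ → Ω → (Fin d → ℝ)) (θ : ℕ → (Fin d → ℝ)),
        Adapted F ρ →
        (∀ k, Measurable (w (k + 1))) →
        (∀ ω, ρ 0 ω = θ 0) →
        (∀ k ω, ρ (k + 1) ω = ρ k ω + ((N : ℝ))⁻¹ • (f (ρ k ω) + w (k + 1) ω)) →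
        (∀ k, P[w (k + 1)|F k] =ᵐ[P] 0) →
        (∀ k, ∀ᵐ ω ∂P, ‖w (k + 1) ω‖ ≤ Γ) →
        (∀ k, θ (k + 1) = θ k + ((N : ℝ))⁻¹ • f (θ k)) →
      ∀ (ε : ℝ), 0 < ε →
      ∀ (T : ℕ), (T : ℝ) ≤ c * N →
        P {ω | ∃ k ≤ T, ε ≤ ‖ρ k ω - θ k‖} ≤
          ENNReal.ofReal (C₁ * Real.exp (-C₂ * ε ^ 2 * N)) := by
  classical
  have hd1 : (1:ℝ) ≤ d := by exact_mod_cast hd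
  refine ⟨2 * d, Real.exp (-(2 * |L| * c)) / (8 * c * (|Γ| + 1) ^ 2),
    by linarith, by positivity, ?_⟩
  intro Ω mΩ P hP F f hB hLip N hN ρ w θ hadp hwmeas h0 hrec hcond hbdd hθ ε hε T hT
  haveI := hP
  haveI : (ae P).NeBot := ae_neBot.2 (IsProbabilityMeasure.ne_zero P)
  have hNe : Nonempty (Fin d) := ⟨⟨0, hd⟩⟩
  -- sign facts
  have hL0 : 0 ≤ L := by
    have h1 := hLip (fun _ => (1:ℝ)) 0
    have h2 : ‖(fun _ => (1:ℝ)) - (0 : Fin d → ℝ)‖ = 1 := by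
      rw [sub_zero]
      simpa using pi_norm_const (ι := Fin d) (1:ℝ)
    rw [h2, mul_one] at h1
    exact le_trans (norm_nonneg _) h1
  have habsL : |L| = L := abs_of_nonneg hL0
  rw [habsL]
  set G : ℝ := |Γ| + 1 with hGdef
  have hG : 0 < G := by positivity
  have hΓG : Γ ≤ G := by
    have := le_abs_self Γ; rw [hGdef]; linarith
  have hNpos : (0:ℝ) < N := by exact_mod_cast Nat.lt_of_lt_of_le Nat.zero_lt_one hN
  have hN0 : (N:ℝ) ≠ 0 := ne_of_gt hNpos
  -- trivial case T = 0
  rcases Nat.eq_zero_or_pos T with hT0 | hTpos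
  · subst hT0
    have hempty : {ω | ∃ k ≤ 0, ε ≤ ‖ρ k ω - θ k‖} = ∅ := by
      ext ω
      simp only [Set.mem_setOf_eq, Set.mem_empty_iff_false, iff_false, not_exists]
      rintro k ⟨hk, hke⟩
      interval_cases k
      rw [h0 ω, sub_self, norm_zero] at hke
      linarith
    rw [hempty, measure_empty]
    exact zero_le
  have hTR : (0:ℝ) < T := by exact_mod_cast hTpos
  -- parameters
  set lam : ℝ := ε * N * Real.exp (-(L * c)) / 2 with hlamdef
  have hlam : 0 < lam := by positivity
  set t : ℝ := lam / (T * G ^ 2) with htdef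
  have ht : 0 < t := div_pos hlam (by positivity)
  -- continuity and measurability of the noise
  have hfc : Continuous f := by
    refine (LipschitzWith.of_dist_le_mul (K := L.toNNReal) fun x y => ?_).continuous
    rw [dist_eq_norm, dist_eq_norm]
    refine (hLip x y).trans (mul_le_mul_of_nonneg_right ?_ (norm_nonneg _))
    rw [Real.coe_toNNReal']
    exact le_max_left _ _
  have hwalt : ∀ k, w (k + 1) = fun ω => (N:ℝ) • (ρ (k + 1) ω - ρ k ω) - f (ρ k ω) := by
    intro k; funext ω
    rw [hrec k ω, add_sub_cancel_left, smul_smul, mul_inv_cancel₀ hN0, one_smul,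
      add_sub_cancel_left]
  have hwSM : ∀ k, StronglyMeasurable[F (k + 1)] (w (k + 1)) := by
    intro k
    rw [hwalt k]
    exact (((hadp (k + 1)).stronglyMeasurable.sub ((hadp k).stronglyMeasurable.mono (F.mono k.le_succ))).const_smul ((N:ℝ))).sub
      (hfc.comp_stronglyMeasurable ((hadp k).stronglyMeasurable.mono (F.mono k.le_succ)))
  have hwint : ∀ k, Integrable (w (k + 1)) P := fun k =>
    (integrable_const Γ).mono' ((hwSM k).mono (F.le _)).aestronglyMeasurable (hbdd k)
  -- Azuma per coordinate and sign
  set b : ENNReal := ENNReal.ofReal (Real.cosh (t * G) ^ T * Real.exp (-(t * lam))) with hbdef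
  have hcoordbdd : ∀ (i : Fin d) k, ∀ᵐ ω ∂P, |w (k + 1) ω i| ≤ G := by
    intro i k
    filter_upwards [hbdd k] with ω h
    calc |w (k + 1) ω i| ≤ ‖w (k + 1) ω‖ := by
          rw [← Real.norm_eq_abs]; exact norm_le_pi_norm _ i
      _ ≤ G := h.trans hΓG
  have hplus : ∀ i : Fin d,
      P {ω | ∃ k ≤ T, lam ≤ ∑ j ∈ Finset.range k, w (j + 1) ω i} ≤ b :=
    fun i => mfdb_azuma P F (fun k ω => w k ω i)
      (fun k => (continuous_apply i).comp_stronglyMeasurable (hwSM k))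
      (fun k => mfdb_condexp_eval P F k (hwint k) (hcond k) i)
      hG (hcoordbdd i) T ht
  have hminus : ∀ i : Fin d,
      P {ω | ∃ k ≤ T, lam ≤ ∑ j ∈ Finset.range k, -(w (j + 1) ω i)} ≤ b := by
    intro i
    refine mfdb_azuma P F (fun k ω => -(w k ω i))
      (fun k => ((continuous_apply i).comp_stronglyMeasurable (hwSM k)).neg)
      (fun k => ?_) hG (fun k => (hcoordbdd i k).mono fun ω h => by rwa [abs_neg]) T ht
    have h1 := condExp_neg (μ := P) (m := F k) (fun ω => w (k + 1) ω i)
    have h2 := mfdb_condexp_eval P F k (hwint k) (hcond k) i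
    refine Filter.EventuallyEq.trans (by exact h1) ?_
    filter_upwards [h2] with ω e2
    simp only [Pi.neg_apply, e2]
    simp
  -- a.e. inclusion of the deviation event in the union of martingale events
  have hincl : ∀ᵐ ω ∂P, ω ∈ {ω | ∃ k ≤ T, ε ≤ ‖ρ k ω - θ k‖} →
      ω ∈ ⋃ i : Fin d, ({ω | ∃ k ≤ T, lam ≤ ∑ j ∈ Finset.range k, w (j + 1) ω i} ∪
        {ω | ∃ k ≤ T, lam ≤ ∑ j ∈ Finset.range k, -(w (j + 1) ω i)}) := by
    filter_upwards [ae_all_iff.2 hbdd] with ω hω hmem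
    obtain ⟨k0, hk0, hk0e⟩ := hmem
    by_contra hcon
    have hnot : ∀ i : Fin d, ∀ k ≤ T, |(∑ j ∈ Finset.range k, w (j + 1) ω) i| < lam := by
      intro i k hk
      have hs : ∑ j ∈ Finset.range k, -(w (j + 1) ω i)
          = -((∑ j ∈ Finset.range k, w (j + 1) ω) i) := by
        rw [Finset.sum_apply, Finset.sum_neg_distrib]
      rw [abs_lt]
      constructor
      · by_contra h
        push_neg at h
        refine hcon (Set.mem_iUnion.2 ⟨i, Or.inr ⟨k, hk, ?_⟩⟩)
        rw [hs]
        linarith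
      · by_contra h
        push_neg at h
        refine hcon (Set.mem_iUnion.2 ⟨i, Or.inl ⟨k, hk, ?_⟩⟩)
        rw [Finset.sum_apply] at h
        exact h
    have hSv : ∀ k, k ≤ T → ‖∑ j ∈ Finset.range k, w (j + 1) ω‖ ≤ lam := by
      intro k hk
      refine le_of_lt ((pi_norm_lt_iff hlam).2 fun i => ?_)
      rw [Real.norm_eq_abs]
      exact hnot i k hk
    -- discrete Gronwall
    have hgron : ∀ k, k ≤ T →
        ‖(ρ k ω - θ k) - (N:ℝ)⁻¹ • ∑ j ∈ Finset.range k, w (j + 1) ω‖ ≤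
          lam / N * ((1 + L / N) ^ k - 1) := by
      intro k
      induction k with
      | zero =>
        intro _
        simp [h0 ω]
      | succ k ih =>
        intro hk1
        have hk : k ≤ T := Nat.le_of_succ_le hk1
        have ihk := ih hk
        have hid : (ρ (k+1) ω - θ (k+1)) - (N:ℝ)⁻¹ • ∑ j ∈ Finset.range (k+1), w (j + 1) ω
            = ((ρ k ω - θ k) - (N:ℝ)⁻¹ • ∑ j ∈ Finset.range k, w (j + 1) ω)
              + (N:ℝ)⁻¹ • (f (ρ k ω) - f (θ k)) := by
          rw [hrec k ω, hθ k, Finset.sum_range_succ]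
          module
        rw [hid]
        have hinv : |(N:ℝ)⁻¹| = (N:ℝ)⁻¹ := abs_of_pos (by positivity)
        have hdelta : ‖ρ k ω - θ k‖ ≤
            ‖(ρ k ω - θ k) - (N:ℝ)⁻¹ • ∑ j ∈ Finset.range k, w (j + 1) ω‖ + (N:ℝ)⁻¹ * lam := by
          have htri := norm_add_le ((ρ k ω - θ k) - (N:ℝ)⁻¹ • ∑ j ∈ Finset.range k, w (j + 1) ω)
            ((N:ℝ)⁻¹ • ∑ j ∈ Finset.range k, w (j + 1) ω)
          rw [sub_add_cancel] at htri
          refine htri.trans (add_le_add le_rfl ?_)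
          rw [norm_smul, Real.norm_eq_abs, hinv]
          exact mul_le_mul_of_nonneg_left (hSv k hk) (by positivity)
        have hnorm1 : ‖(N:ℝ)⁻¹ • (f (ρ k ω) - f (θ k))‖ ≤ (N:ℝ)⁻¹ * (L * ‖ρ k ω - θ k‖) := by
          rw [norm_smul, Real.norm_eq_abs, hinv]
          exact mul_le_mul_of_nonneg_left (hLip _ _) (by positivity)
        have hLN : 0 ≤ L / N := by positivity
        calc ‖_ + _‖ ≤ ‖(ρ k ω - θ k) - (N:ℝ)⁻¹ • ∑ j ∈ Finset.range k, w (j + 1) ω‖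
              + ‖(N:ℝ)⁻¹ • (f (ρ k ω) - f (θ k))‖ := norm_add_le _ _
          _ ≤ lam / N * ((1 + L / N) ^ k - 1)
              + (N:ℝ)⁻¹ * (L * (lam / N * ((1 + L / N) ^ k - 1) + (N:ℝ)⁻¹ * lam)) := by
            refine add_le_add ihk (hnorm1.trans ?_)
            refine mul_le_mul_of_nonneg_left (mul_le_mul_of_nonneg_left
              (hdelta.trans (add_le_add_left ihk _)) hL0) (by positivity)
          _ = lam / N * ((1 + L / N) ^ (k + 1) - 1) := by
            rw [pow_succ]
            field_simp
            ring
    -- contradiction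
    have hpk : (1 + L / N) ^ k0 ≤ Real.exp (L * c) := by
      calc (1 + L / N) ^ k0 ≤ Real.exp (L / N) ^ k0 := by
            refine pow_le_pow_left₀ (by positivity) ?_ k0
            have := Real.add_one_le_exp (L / N); linarith
        _ = Real.exp (k0 * (L / N)) := (Real.exp_nat_mul _ k0).symm
        _ ≤ Real.exp (L * c) := by
            refine Real.exp_le_exp.2 ?_
            have hk0N : (k0:ℝ) ≤ c * N := le_trans (by exact_mod_cast hk0) hT
            have h1 : (k0:ℝ) / N ≤ c := (div_le_iff₀ hNpos).2 (by linarith)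
            calc (k0:ℝ) * (L / N) = L * ((k0:ℝ) / N) := by ring
              _ ≤ L * c := mul_le_mul_of_nonneg_left h1 hL0
    have hfin1 : ε ≤ lam / N * (1 + L / N) ^ k0 := by
      have h1 := hgron k0 hk0
      have hinv : |(N:ℝ)⁻¹| = (N:ℝ)⁻¹ := abs_of_pos (by positivity)
      have h2 : ‖ρ k0 ω - θ k0‖ ≤ lam / N * ((1 + L / N) ^ k0 - 1) + (N:ℝ)⁻¹ * lam := by
        have htri := norm_add_le ((ρ k0 ω - θ k0) - (N:ℝ)⁻¹ • ∑ j ∈ Finset.range k0, w (j + 1) ω)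
          ((N:ℝ)⁻¹ • ∑ j ∈ Finset.range k0, w (j + 1) ω)
        rw [sub_add_cancel] at htri
        refine htri.trans (add_le_add h1 ?_)
        rw [norm_smul, Real.norm_eq_abs, hinv]
        exact mul_le_mul_of_nonneg_left (hSv k0 hk0) (by positivity)
      have h3 : lam / N * ((1 + L / N) ^ k0 - 1) + (N:ℝ)⁻¹ * lam = lam / N * (1 + L / N) ^ k0 := by
        field_simp
        ring
      rw [h3] at h2
      exact hk0e.trans h2
    have hfin2 : lam / N * (1 + L / N) ^ k0 ≤ ε / 2 := by
      have hexp : Real.exp (-(L * c)) * Real.exp (L * c) = 1 := by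
        rw [← Real.exp_add]; simp
      have h4 : lam / N * Real.exp (L * c) = ε / 2 := by
        calc lam / ↑N * Real.exp (L * c)
            = ε * (Real.exp (-(L * c)) * Real.exp (L * c)) * ((N:ℝ) / N) / 2 := by
              rw [hlamdef]; ring
          _ = ε / 2 := by rw [hexp, div_self hN0]; ring
      calc lam / N * (1 + L / N) ^ k0 ≤ lam / N * Real.exp (L * c) :=
            mul_le_mul_of_nonneg_left hpk (by positivity)
        _ = ε / 2 := h4
    linarith
  -- final measure computation
  set e0 : ℝ := Real.exp (-(Real.exp (-(2 * L * c)) / (8 * c * G ^ 2)) * ε ^ 2 * N) with he0def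
  have hbound : Real.cosh (t * G) ^ T * Real.exp (-(t * lam)) ≤ e0 := by
    have h1 : Real.cosh (t * G) ^ T ≤ Real.exp ((T:ℝ) * ((t * G) ^ 2 / 2)) := by
      calc Real.cosh (t * G) ^ T ≤ Real.exp ((t * G) ^ 2 / 2) ^ T :=
            pow_le_pow_left₀ (Real.cosh_pos _).le (Real.cosh_le_exp_half_sq _) T
        _ = Real.exp ((T:ℝ) * ((t * G) ^ 2 / 2)) := (Real.exp_nat_mul _ T).symm
    have h2 : Real.cosh (t * G) ^ T * Real.exp (-(t * lam)) ≤
        Real.exp ((T:ℝ) * ((t * G) ^ 2 / 2) + -(t * lam)) := by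
      rw [Real.exp_add]
      exact mul_le_mul_of_nonneg_right h1 (Real.exp_pos _).le
    refine h2.trans (Real.exp_le_exp.2 ?_)
    -- exponent comparison
    have hTG : (0:ℝ) < (T:ℝ) * G ^ 2 := by positivity
    have e1 : (T:ℝ) * ((t * G) ^ 2 / 2) = lam ^ 2 / (2 * ((T:ℝ) * G ^ 2)) := by
      rw [htdef]
      field_simp
    have e2 : t * lam = lam ^ 2 / ((T:ℝ) * G ^ 2) := by
      rw [htdef]
      field_simp
    rw [e1, e2]
    have e3 : lam ^ 2 / (2 * ((T:ℝ) * G ^ 2)) + -(lam ^ 2 / ((T:ℝ) * G ^ 2))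
        = -(lam ^ 2 / (2 * ((T:ℝ) * G ^ 2))) := by
      field_simp
      ring
    rw [e3, show -(Real.exp (-(2 * L * c)) / (8 * c * G ^ 2)) * ε ^ 2 * (N:ℝ)
      = -(Real.exp (-(2 * L * c)) / (8 * c * G ^ 2) * ε ^ 2 * N) by ring, neg_le_neg_iff]
    -- need : exp(-2Lc)/(8cG²) * ε² * N ≤ lam²/(2TG²)
    have hexp2 : Real.exp (-(L * c)) ^ 2 = Real.exp (-(2 * L * c)) := by
      rw [sq, ← Real.exp_add]
      congr 1
      ring
    have hlam2 : lam ^ 2 = ε ^ 2 * (N:ℝ) ^ 2 * Real.exp (-(2 * L * c)) / 4 := by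
      rw [hlamdef, ← hexp2]
      ring
    have hstep : lam ^ 2 / (2 * (c * (N:ℝ) * G ^ 2)) ≤ lam ^ 2 / (2 * ((T:ℝ) * G ^ 2)) := by
      gcongr
    refine le_trans (le_of_eq ?_) hstep
    rw [hlam2]
    field_simp
    ring
  have hb : b ≤ ENNReal.ofReal e0 := ENNReal.ofReal_le_ofReal hbound
  calc P {ω | ∃ k ≤ T, ε ≤ ‖ρ k ω - θ k‖}
      ≤ P (⋃ i : Fin d, ({ω | ∃ k ≤ T, lam ≤ ∑ j ∈ Finset.range k, w (j + 1) ω i} ∪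
        {ω | ∃ k ≤ T, lam ≤ ∑ j ∈ Finset.range k, -(w (j + 1) ω i)})) := measure_mono_ae hincl
    _ ≤ ∑ i : Fin d, P ({ω | ∃ k ≤ T, lam ≤ ∑ j ∈ Finset.range k, w (j + 1) ω i} ∪
        {ω | ∃ k ≤ T, lam ≤ ∑ j ∈ Finset.range k, -(w (j + 1) ω i)}) :=
      measure_iUnion_fintype_le _ _
    _ ≤ ∑ _i : Fin d, (b + b) :=
      Finset.sum_le_sum fun i _ => le_trans (measure_union_le _ _)
        (add_le_add (hplus i) (hminus i))
    _ = (d : ENNReal) * (b + b) := by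
      rw [Finset.sum_const, Finset.card_univ, Fintype.card_fin, nsmul_eq_mul]
    _ ≤ (d : ENNReal) * (2 * ENNReal.ofReal e0) :=
      by gcongr; rw [two_mul]; exact add_le_add hb hb
    _ ≤ ENNReal.ofReal (2 * d * Real.exp (-(Real.exp (-(2 * L * c)) / (8 * c * G ^ 2))
        * ε ^ 2 * N)) := by
      rw [← he0def, ENNReal.ofReal_mul (by positivity : (0:ℝ) ≤ 2 * (d:ℝ)),
        show ((2:ℝ) * (d:ℝ)) = ((2 * d : ℕ) : ℝ) by push_cast; ring, ENNReal.ofReal_natCast]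
      push_cast
      rw [mul_comm (2 : ENNReal) ((d : ENNReal))]
      rw [mul_assoc]
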